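/- Let ρ be a critical radius function on ℝ^d with constants B₀, k₀ > 1 and let β be the consolidated constant. There exists a constant A₀ > 1, depending only on B₀ and k₀, such that for every x ∈ ℝ^d: if 0 < r ≤ β then the Agmon ball B_ρ(x,r) is contained in the Euclidean ball B(x, A₀ r ρ(x)); and if r > β then B_ρ(x,r) ⊆ B(x, ((rβ)^{k₀+1} − 1) ρ(x)). -/

import Mathlib

open MeasureTheory Metric Set

noncomputable section

/-- A critical radius function with constants `B₀, k₀`. -/
def IsCRF {d : ℕ} (ρ : EuclideanSpace ℝ (Fin d) → ℝ) (B₀ k₀ : ℝ) : Prop :=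
  (∀ x, 0 < ρ x) ∧ ∀ x y : EuclideanSpace ℝ (Fin d),
    B₀⁻¹ * ρ x * (1 + dist x y / ρ x) ^ (-k₀) ≤ ρ y ∧
    ρ y ≤ B₀ * ρ x * (1 + dist x y / ρ x) ^ (k₀ / (k₀ + 1))

/-- The Agmon distance associated to `ρ`. -/
def agmonDist {d : ℕ} (ρ : EuclideanSpace ℝ (Fin d) → ℝ)
    (x y : EuclideanSpace ℝ (Fin d)) : ℝ :=
  sInf { L : ℝ | ∃ γ : ℝ → EuclideanSpace ℝ (Fin d), ContDiff ℝ 1 γ ∧ γ 0 = x ∧ γ 1 = y ∧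
    L = ∫ t in (0:ℝ)..1, (ρ (γ t))⁻¹ * ‖deriv γ t‖ }

/-- The Agmon ball `B_ρ(x,r)`. -/
def agmonBall {d : ℕ} (ρ : EuclideanSpace ℝ (Fin d) → ℝ)
    (x : EuclideanSpace ℝ (Fin d)) (r : ℝ) : Set (EuclideanSpace ℝ (Fin d)) :=
  { y | agmonDist ρ x y < r }

theorem stmt3 {d : ℕ} (ρ : EuclideanSpace ℝ (Fin d) → ℝ) (B₀ k₀ D₀ D₁ β : ℝ)
    (hB₀ : 1 < B₀) (hk₀ : 1 < k₀) (hρ : IsCRF ρ B₀ k₀)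
    (hD₀ : 1 < D₀)
    (hD₀loc : ∀ x y : EuclideanSpace ℝ (Fin d), dist x y ≤ 2 * ρ x →
      D₀⁻¹ * (dist x y / ρ x) ≤ agmonDist ρ x y ∧ agmonDist ρ x y ≤ D₀ * (dist x y / ρ x))
    (hD₁ : 1 < D₁)
    (hD₁up : ∀ x y : EuclideanSpace ℝ (Fin d),
      agmonDist ρ x y ≤ D₁ * (1 + dist x y / ρ x) ^ (k₀ + 1))
    (hD₁low : ∀ x y : EuclideanSpace ℝ (Fin d), ρ x ≤ dist x y →
      D₁⁻¹ * (1 + dist x y / ρ x) ^ (k₀ + 1)⁻¹ ≤ agmonDist ρ x y)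
    (hβ : max (max B₀ D₀) (max D₁ 2) ≤ β) :
    ∃ A₀ : ℝ, 1 < A₀ ∧ ∀ x : EuclideanSpace ℝ (Fin d),
      (∀ r : ℝ, 0 < r → r ≤ β → agmonBall ρ x r ⊆ ball x (A₀ * r * ρ x)) ∧
      (∀ r : ℝ, β < r → agmonBall ρ x r ⊆ ball x (((r * β) ^ (k₀ + 1) - 1) * ρ x)) := by

  obtain ⟨hρpos, -⟩ := hρ
  have hβ2 : (2:ℝ) ≤ β := le_trans ((le_max_right D₁ 2).trans (le_max_right _ _)) hβ
  have hD₀β : D₀ ≤ β := le_trans ((le_max_right B₀ D₀).trans (le_max_left _ _)) hβ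
  have hD₁β : D₁ ≤ β := le_trans ((le_max_left D₁ 2).trans (le_max_right _ _)) hβ
  have hβ1 : (1:ℝ) < β := lt_of_lt_of_le one_lt_two hβ2
  have hβ0 : (0:ℝ) < β := by linarith
  have hk1 : (0:ℝ) < k₀ + 1 := by linarith
  refine ⟨β ^ (2*k₀+3), (Real.one_lt_rpow_iff_of_pos hβ0).2 (Or.inl ⟨hβ1, by linarith⟩),
    fun x => ⟨?_, ?_⟩⟩
  · intro r hr hrβ y hy
    have hy' : agmonDist ρ x y < r := hy
    have hρx := hρpos x
    rw [mem_ball, dist_comm]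
    by_cases h : dist x y ≤ 2 * ρ x
    · have h1 := (hD₀loc x y h).1
      have h2 : dist x y / ρ x < D₀ * r := by
        have hD₀0 : (0:ℝ) < D₀ := by linarith
        rw [inv_mul_le_iff₀ hD₀0] at h1
        calc dist x y / ρ x ≤ D₀ * agmonDist ρ x y := h1
          _ < D₀ * r := by exact mul_lt_mul_of_pos_left hy' hD₀0
      have hβA : β ≤ β ^ (2*k₀+3) := by
        nth_rewrite 1 [← Real.rpow_one β]
        exact Real.rpow_le_rpow_of_exponent_le hβ1.le (by linarith)
      have : dist x y < D₀ * r * ρ x := by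
        rw [div_lt_iff₀ hρx] at h2; linarith
      calc dist x y < D₀ * r * ρ x := this
        _ ≤ β ^ (2*k₀+3) * r * ρ x :=
            mul_le_mul_of_nonneg_right
              (mul_le_mul_of_nonneg_right (hD₀β.trans hβA) hr.le) hρx.le
    · push_neg at h
      have hxy : ρ x ≤ dist x y := by linarith
      have h1 := hD₁low x y hxy
      set s := dist x y / ρ x with hs
      have hs0 : 0 ≤ s := div_nonneg dist_nonneg hρx.le
      have hD₁0 : (0:ℝ) < D₁ := by linarith
      have ht : (1 + s) ^ (k₀ + 1)⁻¹ < D₁ * r := by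
        rw [inv_mul_le_iff₀ hD₁0] at h1
        calc (1 + s) ^ (k₀ + 1)⁻¹ ≤ D₁ * agmonDist ρ x y := h1
          _ < D₁ * r := mul_lt_mul_of_pos_left hy' hD₁0
      have ht0 : 0 ≤ (1 + s) ^ (k₀ + 1)⁻¹ := Real.rpow_nonneg (by linarith) _
      have h2 : 1 + s < (D₁ * r) ^ (k₀ + 1) := by
        have := Real.rpow_lt_rpow ht0 ht hk1
        rwa [Real.rpow_inv_rpow (by linarith) hk1.ne'] at this
      have h3 : (D₁ * r) ^ (k₀ + 1) ≤ (β * r) ^ (k₀ + 1) :=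
        Real.rpow_le_rpow (by positivity) (by nlinarith) hk1.le
      have h4 : (β * r) ^ (k₀ + 1) ≤ β ^ (2*k₀+3) * r := by
        have e1 : (β * r) ^ (k₀ + 1) = β ^ (k₀+1) * r ^ (k₀+1) :=
          Real.mul_rpow hβ0.le hr.le
        have e2 : r ^ (k₀+1) = r ^ k₀ * r := by
          rw [Real.rpow_add hr, Real.rpow_one]
        have e3 : r ^ k₀ ≤ β ^ k₀ := Real.rpow_le_rpow hr.le hrβ (by linarith)
        have e4 : β ^ (k₀+1) * β ^ k₀ = β ^ (2*k₀+1) := by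
          rw [← Real.rpow_add hβ0]; ring_nf
        have e5 : β ^ (2*k₀+1) ≤ β ^ (2*k₀+3) :=
          Real.rpow_le_rpow_of_exponent_le hβ1.le (by linarith)
        have hb1 : (0:ℝ) ≤ β ^ (k₀+1) := Real.rpow_nonneg hβ0.le _
        calc (β * r) ^ (k₀ + 1) = β ^ (k₀+1) * (r ^ k₀ * r) := by rw [e1, e2]
          _ ≤ β ^ (k₀+1) * (β ^ k₀ * r) := by
              apply mul_le_mul_of_nonneg_left _ hb1
              exact mul_le_mul_of_nonneg_right e3 hr.le
          _ = β ^ (2*k₀+1) * r := by rw [← mul_assoc, e4]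
          _ ≤ β ^ (2*k₀+3) * r := mul_le_mul_of_nonneg_right e5 hr.le
      have hsd : dist x y = s * ρ x := by rw [hs, div_mul_cancel₀ _ hρx.ne']
      rw [hsd]
      have : s < β ^ (2*k₀+3) * r := by linarith
      nlinarith
  · intro r hrβ y hy
    have hy' : agmonDist ρ x y < r := hy
    have hρx := hρpos x
    have hr0 : (0:ℝ) < r := by linarith
    rw [mem_ball, dist_comm]
    have hrβ1 : (1:ℝ) ≤ r * β := by nlinarith
    have hpow : (2:ℝ) ≤ (r * β) ^ (k₀ + 1) := by
      calc (2:ℝ) ≤ r * β := by nlinarith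
        _ = (r * β) ^ (1:ℝ) := (Real.rpow_one _).symm
        _ ≤ (r * β) ^ (k₀ + 1) := Real.rpow_le_rpow_of_exponent_le hrβ1 (by linarith)
    by_cases h : ρ x ≤ dist x y
    · have h1 := hD₁low x y h
      set s := dist x y / ρ x with hs
      have hs0 : 0 ≤ s := div_nonneg dist_nonneg hρx.le
      have hD₁0 : (0:ℝ) < D₁ := by linarith
      have ht : (1 + s) ^ (k₀ + 1)⁻¹ < D₁ * r := by
        rw [inv_mul_le_iff₀ hD₁0] at h1
        calc (1 + s) ^ (k₀ + 1)⁻¹ ≤ D₁ * agmonDist ρ x y := h1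
          _ < D₁ * r := mul_lt_mul_of_pos_left hy' hD₁0
      have ht0 : 0 ≤ (1 + s) ^ (k₀ + 1)⁻¹ := Real.rpow_nonneg (by linarith) _
      have h2 : 1 + s < (D₁ * r) ^ (k₀ + 1) := by
        have := Real.rpow_lt_rpow ht0 ht hk1
        rwa [Real.rpow_inv_rpow (by linarith) hk1.ne'] at this
      have h3 : (D₁ * r) ^ (k₀ + 1) ≤ (r * β) ^ (k₀ + 1) :=
        Real.rpow_le_rpow (by positivity) (by nlinarith) hk1.le
      have hsd : dist x y = s * ρ x := by rw [hs, div_mul_cancel₀ _ hρx.ne']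
      rw [hsd]
      have : s < (r * β) ^ (k₀ + 1) - 1 := by linarith
      nlinarith
    · push_neg at h
      calc dist x y < ρ x := h
        _ = 1 * ρ x := (one_mul _).symm
        _ ≤ ((r * β) ^ (k₀ + 1) - 1) * ρ x := by nlinarith
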